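/- Let C be a field with involution c ↦ c̄ (fixed field R), A a C-algebra with conjugate-linear anti-involution *, and {φ_s : s ∈ S} elements satisfying quadratic relations φ_s² = (q_s − 1)φ_s + q_s·1 with q_s ∈ C× \ {1}, where φ_s and 1 are linearly independent and φ_s* = c_s·φ_s for some c_s ∈ C×. Assume that the parameter normalization is unique in the sense that if (dφ_s)² = (q−1)(dφ_s) + q·1 with q in a distinguished set C⁺ then d = 1 (as in Proposition on unique scalars). Then c_s = 1, i.e., φ_s* = φ_s. -/
import Mathlib


/-- With `st` a conjugate-linear anti-involution of a `C`-algebra `A`, suppose `φ_s`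
satisfies the quadratic relation `φ_s² = (q_s − 1)φ_s + q_s·1` with `q_s ∈ C⁺`
(where `C⁺ ⊆ C× \ {1}` contains exactly one of each inverse pair and `q_s` is fixed
by the involution), `{φ_s, 1}` is linearly independent, and `st(φ_s) = c_s·φ_s`.
If the normalization is unique — `(d·φ_s)² = (q−1)(d·φ_s) + q·1` with `q ∈ C⁺`
forces `d = 1` — then `c_s = 1`, i.e., `st(φ_s) = φ_s`. -/
theorem stmt_14 {C A : Type*} [Field C] [Ring A] [Algebra C A]
    (σ : C ≃+* C) (hσ : ∀ c : C, σ (σ c) = c)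
    (Cplus : Set C) (hsub : ∀ r ∈ Cplus, r ≠ 0 ∧ r ≠ 1)
    (hCplus : ∀ r : C, r ≠ 0 → r ≠ 1 → (({r, r⁻¹} : Set C) ∩ Cplus).ncard = 1)
    (st : A → A)
    (hadd : ∀ a b : A, st (a + b) = st a + st b)
    (hsmul : ∀ (c : C) (a : A), st (c • a) = σ c • st a)
    (hmul : ∀ a b : A, st (a * b) = st b * st a)
    (hinvol : ∀ a : A, st (st a) = a)
    (hone : st (1 : A) = 1)
    (φs : A) (qs : C) (hqs : qs ∈ Cplus) (hqsfix : σ qs = qs)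
    (hrel : φs * φs = (qs - 1) • φs + qs • (1 : A))
    (hind : ∀ a b : C, a • φs + b • (1 : A) = 0 → a = 0 ∧ b = 0)
    (cs : C) (hcs : cs ≠ 0) (hstφ : st φs = cs • φs)
    (huniq : ∀ d qq : C, d ≠ 0 →
      (d • φs) * (d • φs) = (qq - 1) • (d • φs) + qq • (1 : A) → qq ∈ Cplus → d = 1) :
    cs = 1 := by
  apply huniq cs qs hcs _ hqs
  have h1 : (cs • φs) * (cs • φs) = st (φs * φs) := by
    rw [hmul, hstφ]
  rw [h1, hrel, hadd, hsmul, hsmul, hstφ, hone, map_sub, map_one, hqsfix]
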